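/- Let G be a group with a left-invariant partial order < and a left-invariant rectifiable simply connected extension (∼_u, ∼_l). Define a relation R on G⁺ by: x R y if and only if x = y, or x, y ∈ G × {−1, 1} and B_{x,y} = {x, y} (computed in G⁺ with the induced order <⁺ and relations (∼_u⁺, ∼_l⁺)). Then R is an equivalence relation on G⁺. -/
import Mathlib


open Pointwise

namespace PaperSC

variable {S : Type*}

/-- Exactly one of four propositions holds. -/
def ExactlyOne4 (p q r s : Prop) : Prop :=
  (p ∨ q ∨ r ∨ s) ∧ (p → ¬q ∧ ¬r ∧ ¬s) ∧ (q → ¬r ∧ ¬s) ∧ (r → ¬s)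

/-- `x` and `y` are incomparable with respect to the strict order `lt`. -/
def Incomp (lt : S → S → Prop) (x y : S) : Prop :=
  x ≠ y ∧ ¬ lt x y ∧ ¬ lt y x

/-- The reflexive closure of `lt`. -/
def Le' (lt : S → S → Prop) (x y : S) : Prop := x = y ∨ lt x y

/-- `x ∼ᵤ y` : `x` and `y` are incomparable and have a common upper bound. -/
def SimU (lt : S → S → Prop) (x y : S) : Prop :=
  Incomp lt x y ∧ ∃ z, Le' lt x z ∧ Le' lt y z

/-- `x ∼ₗ y` : `x` and `y` are incomparable and have a common lower bound. -/
def SimL (lt : S → S → Prop) (x y : S) : Prop :=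
  Incomp lt x y ∧ ∃ z, Le' lt z x ∧ Le' lt z y

/-- Every incomparable pair has a common upper bound or a common lower bound. -/
def StronglyConnectedRel (lt : S → S → Prop) : Prop :=
  ∀ x y, Incomp lt x y → SimU lt x y ∨ SimL lt x y

/-- Acyclicity: `x ∼ᵤ y` and `x ∼ₗ z` imply `y < z`. -/
def AcyclicRel (lt : S → S → Prop) : Prop :=
  ∀ x y z, SimU lt x y → SimL lt x z → lt y z

/-- `(u, l)` is a simply connected extension of the strict partial order `lt`. -/
structure IsSCExt (lt u l : S → S → Prop) : Prop where
  u_symm : ∀ x y, u x y → u y x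
  l_symm : ∀ x y, l x y → l y x
  exactly_one : ∀ x y, x ≠ y → ExactlyOne4 (lt x y) (lt y x) (u x y) (l x y)
  u_of_ub : ∀ x y, Incomp lt x y → (∃ z, Le' lt x z ∧ Le' lt y z) → u x y
  l_of_lb : ∀ x y, Incomp lt x y → (∃ z, Le' lt z x ∧ Le' lt z y) → l x y
  acyclic : ∀ x y z, u x y → l x z → lt y z

/-- `b` is between `a` and `c` (with respect to `lt` and the extension `(u, l)`). -/
def Btwn (lt u l : S → S → Prop) (a c b : S) : Prop :=
  (lt a c ∧ ((lt a b ∧ lt b c) ∨ (u a b ∧ l b c))) ∨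
  (lt c a ∧ ((lt c b ∧ lt b a) ∨ (u c b ∧ l b a))) ∨
  (l a c ∧ ((l a b ∧ lt b c) ∨ (l c b ∧ lt b a))) ∨
  (u a c ∧ ((u a b ∧ lt c b) ∨ (u c b ∧ lt a b)))

/-- The between set `B_{a,b}`; it equals `{a}` when `a = b`. -/
def BSet (lt u l : S → S → Prop) (a b : S) : Set S :=
  {a, b} ∪ {x | a ≠ b ∧ Btwn lt u l a b x}

/-- The set `A` is totally ordered by `lt`. -/
def IsChainRel (lt : S → S → Prop) (A : Set S) : Prop :=
  ∀ p ∈ A, ∀ q ∈ A, p = q ∨ lt p q ∨ lt q p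

/-- `x O y` iff `B_{x,y}` is totally ordered by `lt`. -/
def ORel (lt u l : S → S → Prop) (x y : S) : Prop :=
  IsChainRel lt (BSet lt u l x y)

/-- The extension is rectifiable: every between set is a finite union of `O`-classes. -/
def Rectifiable (lt u l : S → S → Prop) : Prop :=
  ∀ a b : S, a ≠ b → ∃ F : Finset S,
    (↑F : Set S) ⊆ BSet lt u l a b ∧
    ∀ x ∈ BSet lt u l a b, ∃ c ∈ F, ORel lt u l x c

/-- A relation on a group is left-invariant. -/
def LeftInvariant {G : Type*} [Group G] (r : G → G → Prop) : Prop :=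
  ∀ f g h : G, r g h → r (f * g) (f * h)

/-- A subgroup `H` is completely convex: between sets of elements of `H` lie in `H`. -/
def CompletelyConvex {G : Type*} [Group G] (lt u l : G → G → Prop) (H : Subgroup G) : Prop :=
  ∀ h1 ∈ H, ∀ h2 ∈ H, BSet lt u l h1 h2 ⊆ (H : Set G)

/-- The relation induced on the quotient `G ⧸ H` by a relation `r` on `G`:
`g₁H r' g₂H` iff the cosets are distinct and `r g₁ (g₂ h)` for some `h ∈ H`. -/
def QRel {G : Type*} [Group G] (r : G → G → Prop) (H : Subgroup G) (x y : G ⧸ H) : Prop :=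
  x ≠ y ∧ ∃ g1 g2 : G, (g1 : G ⧸ H) = x ∧ (g2 : G ⧸ H) = y ∧ ∃ h ∈ H, r g1 (g2 * h)

/-- The order on `G⁺ = G × {-1, 0, 1}`: `(g,i) <⁺ (h,j)` iff `g < h`, or `g = h` and `i < j`. -/
def PLt {G : Type*} (lt : G → G → Prop) (x y : G × SignType) : Prop :=
  lt x.1 y.1 ∨ (x.1 = y.1 ∧ x.2 < y.2)

/-- `(g,i) ∼ᵤ⁺ (h,j)` iff `g ∼ᵤ h`. -/
def PU {G : Type*} (u : G → G → Prop) (x y : G × SignType) : Prop := u x.1 y.1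

/-- `(g,i) ∼ₗ⁺ (h,j)` iff `g ∼ₗ h`. -/
def PL {G : Type*} (l : G → G → Prop) (x y : G × SignType) : Prop := l x.1 y.1

section Aux

variable {G : Type*}

/-- Context: a strict partial order with a simply connected extension. -/
structure Ctx (lt u l : G → G → Prop) : Prop where
  hirr : ∀ x, ¬ lt x x
  htrans : ∀ x y z, lt x y → lt y z → lt x z
  hsce : IsSCExt lt u l

namespace Ctx

variable {lt u l : G → G → Prop} (C : Ctx lt u l) {a b c : G}

include C

lemma lt_ne (h : lt a b) : a ≠ b := fun e => C.hirr a (e ▸ h)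

lemma asymm (h : lt a b) : ¬ lt b a := fun h' => C.hirr a (C.htrans _ _ _ h h')

lemma not_u_of_lt (h : lt a b) : ¬ u a b :=
  ((C.hsce.exactly_one a b (C.lt_ne h)).2.1 h).2.1

lemma not_l_of_lt (h : lt a b) : ¬ l a b :=
  ((C.hsce.exactly_one a b (C.lt_ne h)).2.1 h).2.2

lemma not_u_of_lt' (h : lt a b) : ¬ u b a := fun hu => C.not_u_of_lt h (C.hsce.u_symm _ _ hu)

lemma not_l_of_lt' (h : lt a b) : ¬ l b a := fun hl => C.not_l_of_lt h (C.hsce.l_symm _ _ hl)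

lemma not_lt_of_u (hu : u a b) : ¬ lt a b := fun h => C.not_u_of_lt h hu

lemma not_lt_of_u' (hu : u a b) : ¬ lt b a := fun h => C.not_u_of_lt' h hu

lemma not_lt_of_l (hl : l a b) : ¬ lt a b := fun h => C.not_l_of_lt h hl

lemma not_lt_of_l' (hl : l a b) : ¬ lt b a := fun h => C.not_l_of_lt' h hl

lemma u_l_false (hu : u a b) (hl : l a b) : False := C.hirr b (C.hsce.acyclic a b b hu hl)

lemma u_or_l (hne : a ≠ b) (h1 : ¬ lt a b) (h2 : ¬ lt b a) : u a b ∨ l a b := by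
  rcases (C.hsce.exactly_one a b hne).1 with h | h | h | h
  · exact absurd h h1
  · exact absurd h h2
  · exact Or.inl h
  · exact Or.inr h

lemma mk_u (hne : a ≠ b) (h1 : ¬ lt a b) (h2 : ¬ lt b a) (z : G)
    (hz1 : lt a z) (hz2 : lt b z) : u a b :=
  C.hsce.u_of_ub a b ⟨hne, h1, h2⟩ ⟨z, Or.inr hz1, Or.inr hz2⟩

lemma mk_l (hne : a ≠ b) (h1 : ¬ lt a b) (h2 : ¬ lt b a) (z : G)
    (hz1 : lt z a) (hz2 : lt z b) : l a b :=
  C.hsce.l_of_lb a b ⟨hne, h1, h2⟩ ⟨z, Or.inr hz1, Or.inr hz2⟩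

end Ctx

/-- `a,b` is an adjacent pair of type `A` : `a < b` with nothing in between. -/
def CondA (lt u l : G → G → Prop) (a b : G) : Prop :=
  lt a b ∧ (¬ ∃ k, lt a k ∧ lt k b) ∧ (¬ ∃ k, u a k ∧ l k b)

/-- `a,b` is an adjacent pair of type `B` : `a ∼ₗ b` minimally. -/
def CondB (lt u l : G → G → Prop) (a b : G) : Prop :=
  l a b ∧ (¬ ∃ k, l a k ∧ lt k b) ∧ (¬ ∃ k, l b k ∧ lt k a)

/-- `a,b` is an adjacent pair of type `C` : `a ∼ᵤ b` maximally. -/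
def CondC (lt u l : G → G → Prop) (a b : G) : Prop :=
  u a b ∧ (¬ ∃ k, u a k ∧ lt b k) ∧ (¬ ∃ k, u b k ∧ lt a k)

section Lemmas

variable {lt u l : G → G → Prop} (C : Ctx lt u l) {a b c : G}

include C

lemma condB_symm (h : CondB lt u l a b) : CondB lt u l b a :=
  ⟨C.hsce.l_symm _ _ h.1, h.2.2, h.2.1⟩

lemma condC_symm (h : CondC lt u l a b) : CondC lt u l b a :=
  ⟨C.hsce.u_symm _ _ h.1, h.2.2, h.2.1⟩

/-- A(a,b) ∧ A(c,b) gives half of CondC a c. -/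
lemma lemAA_half (h1 : CondA lt u l a b) (h2 : CondA lt u l c b) (hne : a ≠ c) :
    u a c ∧ ¬ ∃ m, u a m ∧ lt c m := by
  obtain ⟨hab, hA2, hA3⟩ := h1
  obtain ⟨hcb, hB2, hB3⟩ := h2
  have hnac : ¬ lt a c := fun h => hA2 ⟨c, h, hcb⟩
  have hnca : ¬ lt c a := fun h => hB2 ⟨a, h, hab⟩
  have huac : u a c := C.mk_u hne hnac hnca b hab hcb
  refine ⟨huac, ?_⟩
  rintro ⟨m, hm1, hm2⟩
  by_cases hmb : m = b
  · exact C.not_u_of_lt hab (hmb ▸ hm1)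
  by_cases hmb1 : lt m b
  · exact hB2 ⟨m, hm2, hmb1⟩
  by_cases hmb2 : lt b m
  · exact C.not_lt_of_u hm1 (C.htrans _ _ _ hab hmb2)
  · exact hA3 ⟨m, hm1, C.mk_l hmb hmb1 hmb2 c hm2 hcb⟩

lemma lemAA (h1 : CondA lt u l a b) (h2 : CondA lt u l c b) :
    a = c ∨ CondC lt u l a c := by
  by_cases hne : a = c
  · exact Or.inl hne
  · exact Or.inr ⟨(lemAA_half C h1 h2 hne).1, (lemAA_half C h1 h2 hne).2,
      (lemAA_half C h2 h1 (Ne.symm hne)).2⟩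

/-- A(b,a) ∧ A(b,c) gives half of CondB a c. -/
lemma lemAA'_half (h1 : CondA lt u l b a) (h2 : CondA lt u l b c) (hne : a ≠ c) :
    l a c ∧ ¬ ∃ m, l a m ∧ lt m c := by
  obtain ⟨hba, hA2, hA3⟩ := h1
  obtain ⟨hbc, hB2, hB3⟩ := h2
  have hnac : ¬ lt a c := fun h => hB2 ⟨a, hba, h⟩
  have hnca : ¬ lt c a := fun h => hA2 ⟨c, hbc, h⟩
  have hlac : l a c := C.mk_l hne hnac hnca b hba hbc
  refine ⟨hlac, ?_⟩
  rintro ⟨m, hm1, hm2⟩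
  by_cases hmb : m = b
  · exact C.not_l_of_lt hba (C.hsce.l_symm _ _ (hmb ▸ hm1))
  by_cases hmb1 : lt m b
  · exact C.not_lt_of_l' hm1 (C.htrans _ _ _ hmb1 hba)
  by_cases hmb2 : lt b m
  · exact hB2 ⟨m, hmb2, hm2⟩
  · -- m and b incomparable, common upper bound c
    have hub : u m b := C.mk_u hmb hmb1 hmb2 c hm2 hbc
    exact hA3 ⟨m, C.hsce.u_symm _ _ hub, C.hsce.l_symm _ _ hm1⟩

lemma lemAA' (h1 : CondA lt u l b a) (h2 : CondA lt u l b c) :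
    a = c ∨ CondB lt u l a c := by
  by_cases hne : a = c
  · exact Or.inl hne
  · exact Or.inr ⟨(lemAA'_half C h1 h2 hne).1, (lemAA'_half C h1 h2 hne).2,
      (lemAA'_half C h2 h1 (Ne.symm hne)).2⟩

lemma lemAB (h1 : CondA lt u l a b) (h2 : CondB lt u l b c) : CondA lt u l a c := by
  obtain ⟨hab, hA2, hA3⟩ := h1
  obtain ⟨hbc, hB2, hB3⟩ := h2
  have hne : a ≠ c := by
    rintro rfl; exact C.not_l_of_lt' hab hbc
  have hnca : ¬ lt c a := fun h => C.not_lt_of_l' hbc (C.htrans _ _ _ h hab)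
  have hac : lt a c := by
    by_cases hac : lt a c
    · exact hac
    rcases C.u_or_l hne hac hnca with h | h
    · exact absurd ⟨c, h, C.hsce.l_symm _ _ hbc⟩ hA3
    · exact absurd ⟨a, C.hsce.l_symm _ _ h, hab⟩ hB3
  refine ⟨hac, ?_, ?_⟩
  · rintro ⟨m, hm1, hm2⟩
    by_cases hmb : m = b
    · exact C.not_lt_of_l hbc (hmb ▸ hm2)
    by_cases hmb1 : lt m b
    · exact hA2 ⟨m, hm1, hmb1⟩
    by_cases hmb2 : lt b m
    · exact C.not_lt_of_l hbc (C.htrans _ _ _ hmb2 hm2)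
    · have : l m b := C.mk_l hmb hmb1 hmb2 a hm1 hab
      exact hB2 ⟨m, C.hsce.l_symm _ _ this, hm2⟩
  · rintro ⟨m, hm1, hm2⟩
    by_cases hmb : m = b
    · exact C.not_u_of_lt hab (hmb ▸ hm1)
    by_cases hmb1 : lt m b
    · exact hB3 ⟨m, C.hsce.l_symm _ _ hm2, hmb1⟩
    by_cases hmb2 : lt b m
    · exact C.not_lt_of_u hm1 (C.htrans _ _ _ hab hmb2)
    · rcases C.u_or_l hmb hmb1 hmb2 with h | h
      · exact C.not_lt_of_l hbc (C.hsce.acyclic m b c h hm2)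
      · exact hA3 ⟨m, hm1, h⟩

lemma lemCA (h1 : CondC lt u l a b) (h2 : CondA lt u l b c) : CondA lt u l a c := by
  obtain ⟨hab, hC2, hC3⟩ := h1
  obtain ⟨hbc, hA2, hA3⟩ := h2
  have hne : a ≠ c := by
    rintro rfl; exact C.not_u_of_lt' hbc hab
  have hnca : ¬ lt c a := fun h => C.not_lt_of_u' hab (C.htrans _ _ _ hbc h)
  have hac : lt a c := by
    by_cases hac : lt a c
    · exact hac
    rcases C.u_or_l hne hac hnca with h | h
    · exact absurd ⟨c, h, hbc⟩ hC2
    · exact absurd ⟨a, C.hsce.u_symm _ _ hab, h⟩ hA3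
  refine ⟨hac, ?_, ?_⟩
  · rintro ⟨m, hm1, hm2⟩
    by_cases hmb : m = b
    · exact C.not_lt_of_u hab (hmb ▸ hm1)
    by_cases hmb1 : lt m b
    · exact C.not_lt_of_u hab (C.htrans _ _ _ hm1 hmb1)
    by_cases hmb2 : lt b m
    · exact hA2 ⟨m, hmb2, hm2⟩
    · have : u m b := C.mk_u hmb hmb1 hmb2 c hm2 hbc
      exact hC3 ⟨m, C.hsce.u_symm _ _ this, hm1⟩
  · rintro ⟨m, hm1, hm2⟩
    by_cases hmb : m = b
    · exact C.not_l_of_lt hbc (hmb ▸ hm2)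
    by_cases hmb1 : lt m b
    · exact C.not_lt_of_l hm2 (C.htrans _ _ _ hmb1 hbc)
    by_cases hmb2 : lt b m
    · exact hC2 ⟨m, hm1, hmb2⟩
    · rcases C.u_or_l hmb hmb1 hmb2 with h | h
      · exact hA3 ⟨m, C.hsce.u_symm _ _ h, hm2⟩
      · exact C.not_lt_of_u hab (C.hsce.acyclic m a b (C.hsce.u_symm _ _ hm1) h)

lemma lemBB_half (h1 : CondB lt u l a b) (h2 : CondB lt u l b c) (hne : a ≠ c) :
    l a c ∧ ¬ ∃ m, l a m ∧ lt m c := by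
  obtain ⟨hab, hA2, hA3⟩ := h1
  obtain ⟨hbc, hB2, hB3⟩ := h2
  have hnac : ¬ lt a c := fun h => hB2 ⟨a, C.hsce.l_symm _ _ hab, h⟩
  have hnca : ¬ lt c a := fun h => hA3 ⟨c, hbc, h⟩
  have hlac : l a c := by
    rcases C.u_or_l hne hnac hnca with h | h
    · exact absurd (C.hsce.acyclic a c b h hab) (C.not_lt_of_l' hbc)
    · exact h
  refine ⟨hlac, ?_⟩
  rintro ⟨m, hm1, hm2⟩
  by_cases hmb : m = b
  · exact C.not_lt_of_l hbc (hmb ▸ hm2)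
  by_cases hmb1 : lt m b
  · exact hA2 ⟨m, hm1, hmb1⟩
  by_cases hmb2 : lt b m
  · exact C.not_lt_of_l hbc (C.htrans _ _ _ hmb2 hm2)
  · rcases C.u_or_l hmb hmb1 hmb2 with h | h
    · exact C.not_lt_of_l' hab (C.hsce.acyclic m b a h (C.hsce.l_symm _ _ hm1))
    · exact hB2 ⟨m, C.hsce.l_symm _ _ h, hm2⟩

lemma lemBB (h1 : CondB lt u l a b) (h2 : CondB lt u l b c) :
    a = c ∨ CondB lt u l a c := by
  by_cases hne : a = c
  · exact Or.inl hne
  · exact Or.inr ⟨(lemBB_half C h1 h2 hne).1, (lemBB_half C h1 h2 hne).2,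
      (lemBB_half C (condB_symm C h2) (condB_symm C h1) (Ne.symm hne)).2⟩

lemma lemCC_half (h1 : CondC lt u l a b) (h2 : CondC lt u l b c) (hne : a ≠ c) :
    u a c ∧ ¬ ∃ m, u a m ∧ lt c m := by
  obtain ⟨hab, hA2, hA3⟩ := h1
  obtain ⟨hbc, hB2, hB3⟩ := h2
  have hnac : ¬ lt a c := fun h => hA3 ⟨c, hbc, h⟩
  have hnca : ¬ lt c a := fun h => hB2 ⟨a, C.hsce.u_symm _ _ hab, h⟩
  have huac : u a c := by
    rcases C.u_or_l hne hnac hnca with h | h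
    · exact h
    · exact absurd (C.hsce.acyclic a b c hab h) (C.not_lt_of_u hbc)
  refine ⟨huac, ?_⟩
  rintro ⟨m, hm1, hm2⟩
  by_cases hmb : m = b
  · exact C.not_lt_of_u' hbc (hmb ▸ hm2)
  by_cases hmb1 : lt m b
  · exact C.not_lt_of_u' hbc (C.htrans _ _ _ hm2 hmb1)
  by_cases hmb2 : lt b m
  · exact hA2 ⟨m, hm1, hmb2⟩
  · rcases C.u_or_l hmb hmb1 hmb2 with h | h
    · exact hB2 ⟨m, C.hsce.u_symm _ _ h, hm2⟩
    · exact C.not_lt_of_u hab (C.hsce.acyclic m a b (C.hsce.u_symm _ _ hm1) h)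

lemma lemCC (h1 : CondC lt u l a b) (h2 : CondC lt u l b c) :
    a = c ∨ CondC lt u l a c := by
  by_cases hne : a = c
  · exact Or.inl hne
  · exact Or.inr ⟨(lemCC_half C h1 h2 hne).1, (lemCC_half C h1 h2 hne).2,
      (lemCC_half C (condC_symm C h2) (condC_symm C h1) (Ne.symm hne)).2⟩

end Lemmas

end Aux

section Plus

variable {G : Type*} {lt u l : G → G → Prop} (C : Ctx lt u l)

lemma sign_cases : ∀ s : SignType, s ≠ 0 → s = -1 ∨ s = 1 := by decide

lemma sltA : (-1 : SignType) < 1 := by decide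

lemma sltB : (-1 : SignType) < 0 := by decide

lemma sltC : (0 : SignType) < 1 := by decide

lemma not_one_lt : ∀ s : SignType, ¬ (1 : SignType) < s := by decide

lemma not_lt_negone : ∀ s : SignType, ¬ s < (-1 : SignType) := by decide

include C

lemma bset_condA {a b : G} (h : CondA lt u l a b) :
    BSet (PLt lt) (PU u) (PL l) (a, 1) (b, -1) = {(a, 1), (b, -1)} := by
  obtain ⟨hab, h2, h3⟩ := h
  apply Set.Subset.antisymm
  · rintro ⟨k, s⟩ (hz | ⟨-, hbt⟩)
    · exact hz
    exfalso
    rcases hbt with ⟨-, hin⟩ | ⟨hca, -⟩ | ⟨hl', -⟩ | ⟨hu', -⟩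
    · rcases hin with ⟨hxz, hzy⟩ | ⟨hu', hl'⟩
      · rcases hxz with hxz | ⟨-, hs⟩
        · rcases hzy with hzy | ⟨-, hs⟩
          · exact h2 ⟨k, hxz, hzy⟩
          · exact not_lt_negone s hs
        · exact not_one_lt s hs
      · exact h3 ⟨k, hu', hl'⟩
    · rcases hca with hca | ⟨he, -⟩
      · exact C.asymm hab hca
      · exact C.lt_ne hab he.symm
    · exact C.not_l_of_lt hab hl'
    · exact C.not_u_of_lt hab hu'
  · exact Set.subset_union_left

lemma bset_condB {a b : G} (h : CondB lt u l a b) :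
    BSet (PLt lt) (PU u) (PL l) (a, -1) (b, -1) = {(a, -1), (b, -1)} := by
  obtain ⟨hab, h2, h3⟩ := h
  apply Set.Subset.antisymm
  · rintro ⟨k, s⟩ (hz | ⟨-, hbt⟩)
    · exact hz
    exfalso
    rcases hbt with ⟨hac, -⟩ | ⟨hca, -⟩ | ⟨-, hin⟩ | ⟨hu', -⟩
    · rcases hac with hac | ⟨-, hs⟩
      · exact C.not_lt_of_l hab hac
      · exact lt_irrefl _ hs
    · rcases hca with hca | ⟨-, hs⟩
      · exact C.not_lt_of_l' hab hca
      · exact lt_irrefl _ hs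
    · rcases hin with ⟨hl1, hzy⟩ | ⟨hl1, hzy⟩
      · rcases hzy with hzy | ⟨-, hs⟩
        · exact h2 ⟨k, hl1, hzy⟩
        · exact not_lt_negone s hs
      · rcases hzy with hzy | ⟨-, hs⟩
        · exact h3 ⟨k, hl1, hzy⟩
        · exact not_lt_negone s hs
    · exact C.u_l_false hu' hab
  · exact Set.subset_union_left

lemma bset_condC {a b : G} (h : CondC lt u l a b) :
    BSet (PLt lt) (PU u) (PL l) (a, 1) (b, 1) = {(a, 1), (b, 1)} := by
  obtain ⟨hab, h2, h3⟩ := h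
  apply Set.Subset.antisymm
  · rintro ⟨k, s⟩ (hz | ⟨-, hbt⟩)
    · exact hz
    exfalso
    rcases hbt with ⟨hac, -⟩ | ⟨hca, -⟩ | ⟨hl', -⟩ | ⟨-, hin⟩
    · rcases hac with hac | ⟨-, hs⟩
      · exact C.not_lt_of_u hab hac
      · exact lt_irrefl _ hs
    · rcases hca with hca | ⟨-, hs⟩
      · exact C.not_lt_of_u' hab hca
      · exact lt_irrefl _ hs
    · exact C.u_l_false hab hl'
    · rcases hin with ⟨hu1, hzy⟩ | ⟨hu1, hzy⟩
      · rcases hzy with hzy | ⟨-, hs⟩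
        · exact h2 ⟨k, hu1, hzy⟩
        · exact not_one_lt s hs
      · rcases hzy with hzy | ⟨-, hs⟩
        · exact h3 ⟨k, hu1, hzy⟩
        · exact not_one_lt s hs
  · exact Set.subset_union_left

lemma btwn_comm {x y z : G × SignType} :
    Btwn (PLt lt) (PU u) (PL l) x y z ↔ Btwn (PLt lt) (PU u) (PL l) y x z := by
  constructor <;> rintro (⟨h1, h2⟩ | ⟨h1, h2⟩ | ⟨h1, h2⟩ | ⟨h1, h2⟩)
  · exact Or.inr (Or.inl ⟨h1, h2⟩)
  · exact Or.inl ⟨h1, h2⟩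
  · exact Or.inr (Or.inr (Or.inl ⟨C.hsce.l_symm _ _ h1, h2.symm⟩))
  · exact Or.inr (Or.inr (Or.inr ⟨C.hsce.u_symm _ _ h1, h2.symm⟩))
  · exact Or.inr (Or.inl ⟨h1, h2⟩)
  · exact Or.inl ⟨h1, h2⟩
  · exact Or.inr (Or.inr (Or.inl ⟨C.hsce.l_symm _ _ h1, h2.symm⟩))
  · exact Or.inr (Or.inr (Or.inr ⟨C.hsce.u_symm _ _ h1, h2.symm⟩))

lemma bset_comm (x y : G × SignType) :
    BSet (PLt lt) (PU u) (PL l) x y = BSet (PLt lt) (PU u) (PL l) y x := by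
  unfold BSet
  ext z
  constructor <;> rintro ((rfl | rfl) | ⟨hne, hb⟩)
  · exact Or.inl (Or.inr rfl)
  · exact Or.inl (Or.inl rfl)
  · exact Or.inr ⟨hne.symm, (btwn_comm C).mp hb⟩
  · exact Or.inl (Or.inr rfl)
  · exact Or.inl (Or.inl rfl)
  · exact Or.inr ⟨hne.symm, (btwn_comm C).mp hb⟩

lemma char {x y : G × SignType} (hx : x.2 ≠ 0) (hy : y.2 ≠ 0) (hxy : x ≠ y)
    (hB : ∀ z, Btwn (PLt lt) (PU u) (PL l) x y z → z = x ∨ z = y) :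
    (x.2 = 1 ∧ y.2 = -1 ∧ CondA lt u l x.1 y.1) ∨
    (x.2 = -1 ∧ y.2 = 1 ∧ CondA lt u l y.1 x.1) ∨
    (x.2 = -1 ∧ y.2 = -1 ∧ CondB lt u l x.1 y.1) ∨
    (x.2 = 1 ∧ y.2 = 1 ∧ CondC lt u l x.1 y.1) := by
  obtain ⟨g, i⟩ := x
  obtain ⟨h, j⟩ := y
  simp only at hx hy ⊢
  have hgh : g ≠ h := by
    rintro rfl
    have hij : i ≠ j := fun e => hxy (by rw [e])
    rcases sign_cases i hx with hi | hi <;> rcases sign_cases j hy with hj | hj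
    · exact hij (hi.trans hj.symm)
    · subst hi; subst hj
      have hbt : Btwn (PLt lt) (PU u) (PL l) (g, -1) (g, 1) (g, 0) :=
        Or.inl ⟨Or.inr ⟨rfl, sltA⟩, Or.inl ⟨Or.inr ⟨rfl, sltB⟩, Or.inr ⟨rfl, sltC⟩⟩⟩
      rcases hB _ hbt with he | he <;> injection he with h1 h2 <;>
        first
          | exact absurd h2 (by decide)
          | exact hgh h1
          | exact hgh h1.symm
    · subst hi; subst hj
      have hbt : Btwn (PLt lt) (PU u) (PL l) (g, 1) (g, -1) (g, 0) :=
        Or.inr (Or.inl ⟨Or.inr ⟨rfl, sltA⟩,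
          Or.inl ⟨Or.inr ⟨rfl, sltB⟩, Or.inr ⟨rfl, sltC⟩⟩⟩)
      rcases hB _ hbt with he | he <;> injection he with h1 h2 <;>
        first
          | exact absurd h2 (by decide)
          | exact hgh h1
          | exact hgh h1.symm
    · exact hij (hi.trans hj.symm)
  rcases (C.hsce.exactly_one g h hgh).1 with hlt | hlt | hrel | hrel
  · -- lt g h : type A
    have hi : i = 1 := by
      rcases sign_cases i hx with hi | hi
      · exfalso; subst hi
        have hbt : Btwn (PLt lt) (PU u) (PL l) (g, -1) (h, j) (g, 1) :=
          Or.inl ⟨Or.inl hlt, Or.inl ⟨Or.inr ⟨rfl, sltA⟩, Or.inl hlt⟩⟩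
        rcases hB _ hbt with he | he <;> injection he with h1 h2 <;>
        first
          | exact absurd h2 (by decide)
          | exact hgh h1
          | exact hgh h1.symm
      · exact hi
    have hj : j = -1 := by
      rcases sign_cases j hy with hj | hj
      · exact hj
      · exfalso; subst hj
        have hbt : Btwn (PLt lt) (PU u) (PL l) (g, i) (h, 1) (h, -1) :=
          Or.inl ⟨Or.inl hlt, Or.inl ⟨Or.inl hlt, Or.inr ⟨rfl, sltA⟩⟩⟩
        rcases hB _ hbt with he | he <;> injection he with h1 h2 <;>
        first
          | exact absurd h2 (by decide)
          | exact hgh h1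
          | exact hgh h1.symm
    subst hi; subst hj
    refine Or.inl ⟨rfl, rfl, hlt, ?_, ?_⟩
    · rintro ⟨k, hk1, hk2⟩
      have hbt : Btwn (PLt lt) (PU u) (PL l) (g, 1) (h, -1) (k, 0) :=
        Or.inl ⟨Or.inl hlt, Or.inl ⟨Or.inl hk1, Or.inl hk2⟩⟩
      rcases hB _ hbt with he | he <;> injection he with h1 h2 <;>
        first
          | exact absurd h2 (by decide)
          | exact hgh h1
          | exact hgh h1.symm
    · rintro ⟨k, hk1, hk2⟩
      have hbt : Btwn (PLt lt) (PU u) (PL l) (g, 1) (h, -1) (k, 0) :=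
        Or.inl ⟨Or.inl hlt, Or.inr ⟨hk1, hk2⟩⟩
      rcases hB _ hbt with he | he <;> injection he with h1 h2 <;>
        first
          | exact absurd h2 (by decide)
          | exact hgh h1
          | exact hgh h1.symm
  · -- lt h g : type A reversed
    have hi : i = -1 := by
      rcases sign_cases i hx with hi | hi
      · exact hi
      · exfalso; subst hi
        have hbt : Btwn (PLt lt) (PU u) (PL l) (g, 1) (h, j) (g, -1) :=
          Or.inr (Or.inl ⟨Or.inl hlt, Or.inl ⟨Or.inl hlt, Or.inr ⟨rfl, sltA⟩⟩⟩)
        rcases hB _ hbt with he | he <;> injection he with h1 h2 <;>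
        first
          | exact absurd h2 (by decide)
          | exact hgh h1
          | exact hgh h1.symm
    have hj : j = 1 := by
      rcases sign_cases j hy with hj | hj
      · exfalso; subst hj
        have hbt : Btwn (PLt lt) (PU u) (PL l) (g, i) (h, -1) (h, 1) :=
          Or.inr (Or.inl ⟨Or.inl hlt, Or.inl ⟨Or.inr ⟨rfl, sltA⟩, Or.inl hlt⟩⟩)
        rcases hB _ hbt with he | he <;> injection he with h1 h2 <;>
        first
          | exact absurd h2 (by decide)
          | exact hgh h1
          | exact hgh h1.symm
      · exact hj
    subst hi; subst hj
    refine Or.inr (Or.inl ⟨rfl, rfl, hlt, ?_, ?_⟩)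
    · rintro ⟨k, hk1, hk2⟩
      have hbt : Btwn (PLt lt) (PU u) (PL l) (g, -1) (h, 1) (k, 0) :=
        Or.inr (Or.inl ⟨Or.inl hlt, Or.inl ⟨Or.inl hk1, Or.inl hk2⟩⟩)
      rcases hB _ hbt with he | he <;> injection he with h1 h2 <;>
        first
          | exact absurd h2 (by decide)
          | exact hgh h1
          | exact hgh h1.symm
    · rintro ⟨k, hk1, hk2⟩
      have hbt : Btwn (PLt lt) (PU u) (PL l) (g, -1) (h, 1) (k, 0) :=
        Or.inr (Or.inl ⟨Or.inl hlt, Or.inr ⟨hk1, hk2⟩⟩)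
      rcases hB _ hbt with he | he <;> injection he with h1 h2 <;>
        first
          | exact absurd h2 (by decide)
          | exact hgh h1
          | exact hgh h1.symm
  · -- u g h : type C
    have hi : i = 1 := by
      rcases sign_cases i hx with hi | hi
      · exfalso; subst hi
        have hbt : Btwn (PLt lt) (PU u) (PL l) (g, -1) (h, j) (g, 1) :=
          Or.inr (Or.inr (Or.inr ⟨hrel,
            Or.inr ⟨C.hsce.u_symm _ _ hrel, Or.inr ⟨rfl, sltA⟩⟩⟩))
        rcases hB _ hbt with he | he <;> injection he with h1 h2 <;>
        first
          | exact absurd h2 (by decide)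
          | exact hgh h1
          | exact hgh h1.symm
      · exact hi
    have hj : j = 1 := by
      rcases sign_cases j hy with hj | hj
      · exfalso; subst hj
        have hbt : Btwn (PLt lt) (PU u) (PL l) (g, i) (h, -1) (h, 1) :=
          Or.inr (Or.inr (Or.inr ⟨hrel, Or.inl ⟨hrel, Or.inr ⟨rfl, sltA⟩⟩⟩))
        rcases hB _ hbt with he | he <;> injection he with h1 h2 <;>
        first
          | exact absurd h2 (by decide)
          | exact hgh h1
          | exact hgh h1.symm
      · exact hj
    subst hi; subst hj
    refine Or.inr (Or.inr (Or.inr ⟨rfl, rfl, hrel, ?_, ?_⟩))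
    · rintro ⟨k, hk1, hk2⟩
      have hbt : Btwn (PLt lt) (PU u) (PL l) (g, 1) (h, 1) (k, 0) :=
        Or.inr (Or.inr (Or.inr ⟨hrel, Or.inl ⟨hk1, Or.inl hk2⟩⟩))
      rcases hB _ hbt with he | he <;> injection he with h1 h2 <;>
        first
          | exact absurd h2 (by decide)
          | exact hgh h1
          | exact hgh h1.symm
    · rintro ⟨k, hk1, hk2⟩
      have hbt : Btwn (PLt lt) (PU u) (PL l) (g, 1) (h, 1) (k, 0) :=
        Or.inr (Or.inr (Or.inr ⟨hrel, Or.inr ⟨hk1, Or.inl hk2⟩⟩))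
      rcases hB _ hbt with he | he <;> injection he with h1 h2 <;>
        first
          | exact absurd h2 (by decide)
          | exact hgh h1
          | exact hgh h1.symm
  · -- l g h : type B
    have hi : i = -1 := by
      rcases sign_cases i hx with hi | hi
      · exact hi
      · exfalso; subst hi
        have hbt : Btwn (PLt lt) (PU u) (PL l) (g, 1) (h, j) (g, -1) :=
          Or.inr (Or.inr (Or.inl ⟨hrel,
            Or.inr ⟨C.hsce.l_symm _ _ hrel, Or.inr ⟨rfl, sltA⟩⟩⟩))
        rcases hB _ hbt with he | he <;> injection he with h1 h2 <;>
        first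
          | exact absurd h2 (by decide)
          | exact hgh h1
          | exact hgh h1.symm
    have hj : j = -1 := by
      rcases sign_cases j hy with hj | hj
      · exact hj
      · exfalso; subst hj
        have hbt : Btwn (PLt lt) (PU u) (PL l) (g, i) (h, 1) (h, -1) :=
          Or.inr (Or.inr (Or.inl ⟨hrel, Or.inl ⟨hrel, Or.inr ⟨rfl, sltA⟩⟩⟩))
        rcases hB _ hbt with he | he <;> injection he with h1 h2 <;>
        first
          | exact absurd h2 (by decide)
          | exact hgh h1
          | exact hgh h1.symm
    subst hi; subst hj
    refine Or.inr (Or.inr (Or.inl ⟨rfl, rfl, hrel, ?_, ?_⟩))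
    · rintro ⟨k, hk1, hk2⟩
      have hbt : Btwn (PLt lt) (PU u) (PL l) (g, -1) (h, -1) (k, 0) :=
        Or.inr (Or.inr (Or.inl ⟨hrel, Or.inl ⟨hk1, Or.inl hk2⟩⟩))
      rcases hB _ hbt with he | he <;> injection he with h1 h2 <;>
        first
          | exact absurd h2 (by decide)
          | exact hgh h1
          | exact hgh h1.symm
    · rintro ⟨k, hk1, hk2⟩
      have hbt : Btwn (PLt lt) (PU u) (PL l) (g, -1) (h, -1) (k, 0) :=
        Or.inr (Or.inr (Or.inl ⟨hrel, Or.inr ⟨hk1, Or.inl hk2⟩⟩))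
      rcases hB _ hbt with he | he <;> injection he with h1 h2 <;>
        first
          | exact absurd h2 (by decide)
          | exact hgh h1
          | exact hgh h1.symm

end Plus

/-- The relation `R` on `G⁺` given by `x R y` iff `x = y`, or
`x, y ∈ G × {-1, 1}` and `B_{x,y} = {x, y}`, is an equivalence relation. -/
theorem stmt19 {G : Type*} [Group G] (lt u l : G → G → Prop)
    (hirr : ∀ x : G, ¬ lt x x)
    (htrans : ∀ x y z : G, lt x y → lt y z → lt x z)
    (hltinv : LeftInvariant lt) (huinv : LeftInvariant u) (hlinv : LeftInvariant l)
    (hsce : IsSCExt lt u l)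
    (hrect : Rectifiable lt u l) :
    Equivalence (fun x y : G × SignType =>
      x = y ∨ (x.2 ≠ 0 ∧ y.2 ≠ 0 ∧
        BSet (PLt lt) (PU u) (PL l) x y = {x, y})) := by
  classical
  have C : Ctx lt u l := ⟨hirr, htrans, hsce⟩
  constructor
  · intro x
    exact Or.inl rfl
  · intro x y hxy
    rcases hxy with rfl | ⟨hx, hy, hB⟩
    · exact Or.inl rfl
    · refine Or.inr ⟨hy, hx, ?_⟩
      rw [bset_comm C y x, hB, Set.pair_comm]
  · intro x y z hxy hyz
    rcases hxy with rfl | ⟨hx0, hy0, hBxy⟩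
    · exact hyz
    rcases hyz with rfl | ⟨hy0', hz0, hByz⟩
    · exact Or.inr ⟨hx0, hy0, hBxy⟩
    by_cases hxz : x = z
    · exact Or.inl hxz
    by_cases hxyeq : x = y
    · subst hxyeq; exact Or.inr ⟨hy0', hz0, hByz⟩
    by_cases hyzeq : y = z
    · subst hyzeq; exact Or.inr ⟨hx0, hy0, hBxy⟩
    have hBxy' : ∀ w, Btwn (PLt lt) (PU u) (PL l) x y w → w = x ∨ w = y := by
      intro w hw
      have hmem : w ∈ BSet (PLt lt) (PU u) (PL l) x y :=
        Set.mem_union_right _ ⟨hxyeq, hw⟩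
      rw [hBxy] at hmem
      simpa using hmem
    have hByz' : ∀ w, Btwn (PLt lt) (PU u) (PL l) y z w → w = y ∨ w = z := by
      intro w hw
      have hmem : w ∈ BSet (PLt lt) (PU u) (PL l) y z :=
        Set.mem_union_right _ ⟨hyzeq, hw⟩
      rw [hByz] at hmem
      simpa using hmem
    refine Or.inr ⟨hx0, hz0, ?_⟩
    rcases char C hx0 hy0 hxyeq hBxy' with
      ⟨hi, hj, hA⟩ | ⟨hi, hj, hA⟩ | ⟨hi, hj, hA⟩ | ⟨hi, hj, hA⟩ <;>
      rcases char C hy0' hz0 hyzeq hByz' with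
        ⟨hj', hk, hA'⟩ | ⟨hj', hk, hA'⟩ | ⟨hj', hk, hA'⟩ | ⟨hj', hk, hA'⟩ <;>
      first
        | (rw [hj] at hj'; exact absurd hj' (by decide))
        | skip
    · -- CA x1 y1, CA z1 y1
      rcases lemAA C hA hA' with heq | hC
      · exact absurd (Prod.ext heq (hi.trans hk.symm)) hxz
      · rw [show x = (x.1, 1) from Prod.ext rfl hi, show z = (z.1, 1) from Prod.ext rfl hk]
        exact bset_condC C hC
    · -- CA x1 y1, CB y1 z1
      have hC := lemAB C hA hA'
      rw [show x = (x.1, 1) from Prod.ext rfl hi, show z = (z.1, -1) from Prod.ext rfl hk]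
      exact bset_condA C hC
    · -- CA y1 x1, CA y1 z1
      rcases lemAA' C hA hA' with heq | hC
      · exact absurd (Prod.ext heq (hi.trans hk.symm)) hxz
      · rw [show x = (x.1, -1) from Prod.ext rfl hi, show z = (z.1, -1) from Prod.ext rfl hk]
        exact bset_condB C hC
    · -- CA y1 x1, CC y1 z1
      have hC := lemCA C (condC_symm C hA') hA
      rw [bset_comm C x z, Set.pair_comm x z,
        show x = (x.1, -1) from Prod.ext rfl hi, show z = (z.1, 1) from Prod.ext rfl hk]
      exact bset_condA C hC
    · -- CB x1 y1, CA z1 y1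
      have hC := lemAB C hA' (condB_symm C hA)
      rw [bset_comm C x z, Set.pair_comm x z,
        show x = (x.1, -1) from Prod.ext rfl hi, show z = (z.1, 1) from Prod.ext rfl hk]
      exact bset_condA C hC
    · -- CB x1 y1, CB y1 z1
      rcases lemBB C hA hA' with heq | hC
      · exact absurd (Prod.ext heq (hi.trans hk.symm)) hxz
      · rw [show x = (x.1, -1) from Prod.ext rfl hi, show z = (z.1, -1) from Prod.ext rfl hk]
        exact bset_condB C hC
    · -- CC x1 y1, CA y1 z1
      have hC := lemCA C hA hA'
      rw [show x = (x.1, 1) from Prod.ext rfl hi, show z = (z.1, -1) from Prod.ext rfl hk]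
      exact bset_condA C hC
    · -- CC x1 y1, CC y1 z1
      rcases lemCC C hA hA' with heq | hC
      · exact absurd (Prod.ext heq (hi.trans hk.symm)) hxz
      · rw [show x = (x.1, 1) from Prod.ext rfl hi, show z = (z.1, 1) from Prod.ext rfl hk]
        exact bset_condC C hC


end PaperSC
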